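/- For every complex number q with |q| < 1, the following identity holds: Σ_{n≥0} (q; q)_{2n} q^{2n} / (q^4; q^4)_n = 1/(1+q) + ((q; q)_∞/(q^4; q^4)_∞) · Σ_{m≥0} q^{2m+1} (−q^2; q^2)_m / (q; q^2)_{m+1}. -/

import Mathlib

/-- The finite q-Pochhammer symbol `(a; q)_n = ∏_{j=0}^{n-1} (1 - a q^j)`. -/
noncomputable def qPoch (a q : ℂ) (n : ℕ) : ℂ := ∏ j ∈ Finset.range n, (1 - a * q ^ j)

/-- The infinite q-Pochhammer symbol `(a; q)_∞ = ∏_{j=0}^{∞} (1 - a q^j)`. -/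
noncomputable def qPochInf (a q : ℂ) : ℂ := ∏' j : ℕ, (1 - a * q ^ j)

open Finset Filter Complex Topology

lemma qPoch_succ (a q : ℂ) (n : ℕ) : qPoch a q (n+1) = qPoch a q n * (1 - a * q ^ n) :=
  Finset.prod_range_succ _ _

lemma qPoch_zero (a q : ℂ) : qPoch a q 0 = 1 := Finset.prod_range_zero _

section

variable {a q : ℂ} (ha : ‖a‖ < 1) (hq : ‖q‖ < 1)

include ha hq in
lemma factor_ne_zero' (j : ℕ) : (1 : ℂ) - a * q ^ j ≠ 0 := by
  intro h
  have h2 : a * q ^ j = 1 := by linear_combination -h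
  have h3 : ‖a * q ^ j‖ < 1 := by
    rw [norm_mul, norm_pow]
    calc ‖a‖ * ‖q‖ ^ j ≤ ‖a‖ * 1 := by
          gcongr
          exact pow_le_one₀ (norm_nonneg q) hq.le
      _ < 1 := by simpa using ha
  rw [h2] at h3; simp at h3

include ha hq in
lemma qPoch_ne_zero (n : ℕ) : qPoch a q n ≠ 0 :=
  Finset.prod_ne_zero_iff.2 fun j _ => factor_ne_zero' ha hq j

include ha hq in
lemma summable_log_factor : Summable (fun j : ℕ => Complex.log (1 - a * q ^ j)) := by
  set C : ℝ := ‖a‖ ^ 2 * (1 - ‖a‖)⁻¹ / 2 + ‖a‖ with hC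
  apply Summable.of_norm_bounded (g := fun j => C * ‖q‖ ^ j)
    ((summable_geometric_of_lt_one (norm_nonneg q) hq).mul_left _)
  intro j
  set x : ℝ := ‖-(a * q ^ j)‖ with hx
  have hx0 : 0 ≤ x := norm_nonneg _
  have hz : x ≤ ‖a‖ * ‖q‖ ^ j := by rw [hx, norm_neg, norm_mul, norm_pow]
  have hqj1 : ‖q‖ ^ j ≤ 1 := pow_le_one₀ (norm_nonneg q) hq.le
  have hqj0 : (0:ℝ) ≤ ‖q‖ ^ j := by positivity
  have hzle : x ≤ ‖a‖ := hz.trans (by nlinarith [norm_nonneg a])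
  have hzlt : x < 1 := lt_of_le_of_lt hzle ha
  have key := Complex.norm_log_one_add_le (z := -(a * q ^ j)) (by rw [← hx]; exact hzlt)
  rw [show (1 : ℂ) + -(a * q ^ j) = 1 - a * q ^ j by ring, ← hx] at key
  refine key.trans ?_
  have hia : (0:ℝ) < 1 - ‖a‖ := by linarith
  have hinv : (1 - x)⁻¹ ≤ (1 - ‖a‖)⁻¹ := by
    apply inv_anti₀ hia; linarith
  have hinv0 : (0:ℝ) ≤ (1 - x)⁻¹ := by rw [inv_nonneg]; linarith
  have hinva : (0:ℝ) ≤ (1 - ‖a‖)⁻¹ := le_of_lt (by positivity)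
  have h1 : x ^ 2 * (1 - x)⁻¹ ≤ (‖a‖ * ‖q‖ ^ j) * (‖a‖ * (1 - ‖a‖)⁻¹) := by
    have hsq : x ^ 2 ≤ (‖a‖ * ‖q‖ ^ j) * ‖a‖ := by nlinarith
    calc x ^ 2 * (1 - x)⁻¹ ≤ ((‖a‖ * ‖q‖ ^ j) * ‖a‖) * (1 - ‖a‖)⁻¹ := by
          apply mul_le_mul hsq hinv hinv0 (by nlinarith [norm_nonneg a])
      _ = (‖a‖ * ‖q‖ ^ j) * (‖a‖ * (1 - ‖a‖)⁻¹) := by ring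
  rw [hC]
  nlinarith [norm_nonneg a]

include ha hq in
lemma multipliable_factor : Multipliable (fun j : ℕ => 1 - a * q ^ j) :=
  Complex.multipliable_of_summable_log (summable_log_factor ha hq)

include ha hq in
lemma qPochInf_ne_zero : qPochInf a q ≠ 0 := by
  have h2 := Complex.cexp_tsum_eq_tprod (f := fun j : ℕ => 1 - a * q ^ j)
    (fun j => factor_ne_zero' ha hq j)
    (summable_log_factor ha hq)
  rw [qPochInf, ← h2]
  exact Complex.exp_ne_zero _

include ha hq in
lemma tendsto_qPoch : Tendsto (fun n => qPoch a q n) atTop (𝓝 (qPochInf a q)) :=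
  (multipliable_factor ha hq).hasProd.tendsto_prod_nat

include hq in
lemma norm_qPoch_le (n : ℕ) : ‖qPoch a q n‖ ≤ Real.exp (‖a‖ * (1 - ‖q‖)⁻¹) := by
  rw [qPoch, norm_prod]
  have hgeo : ∑ j ∈ range n, ‖q‖ ^ j ≤ (1 - ‖q‖)⁻¹ := by
    rw [← tsum_geometric_of_lt_one (norm_nonneg q) hq]
    exact Summable.sum_le_tsum _ (fun j _ => by positivity)
      (summable_geometric_of_lt_one (norm_nonneg q) hq)
  calc ∏ j ∈ range n, ‖1 - a * q ^ j‖
      ≤ ∏ j ∈ range n, Real.exp (‖a‖ * ‖q‖ ^ j) := by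
        apply Finset.prod_le_prod (fun j _ => norm_nonneg _)
        intro j _
        calc ‖1 - a * q ^ j‖ ≤ ‖(1:ℂ)‖ + ‖a * q ^ j‖ := norm_sub_le _ _
          _ = 1 + ‖a‖ * ‖q‖ ^ j := by rw [norm_one, norm_mul, norm_pow]
          _ ≤ Real.exp (‖a‖ * ‖q‖ ^ j) := by
              have := Real.add_one_le_exp (‖a‖ * ‖q‖ ^ j); linarith
    _ = Real.exp (∑ j ∈ range n, ‖a‖ * ‖q‖ ^ j) := (Real.exp_sum _ _).symm
    _ ≤ Real.exp (‖a‖ * (1 - ‖q‖)⁻¹) := by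
        apply Real.exp_le_exp.2
        rw [← Finset.mul_sum]
        exact mul_le_mul_of_nonneg_left hgeo (norm_nonneg a)

include ha hq in
lemma le_norm_qPoch (n : ℕ) :
    Real.exp (-(‖a‖ * (1 - ‖q‖)⁻¹ * (1 - ‖a‖)⁻¹)) ≤ ‖qPoch a q n‖ := by
  rw [qPoch, norm_prod]
  have hia : (0:ℝ) < 1 - ‖a‖ := by linarith
  have hgeo : ∑ j ∈ range n, ‖q‖ ^ j ≤ (1 - ‖q‖)⁻¹ := by
    rw [← tsum_geometric_of_lt_one (norm_nonneg q) hq]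
    exact Summable.sum_le_tsum _ (fun j _ => by positivity)
      (summable_geometric_of_lt_one (norm_nonneg q) hq)
  calc Real.exp (-(‖a‖ * (1 - ‖q‖)⁻¹ * (1 - ‖a‖)⁻¹))
      ≤ Real.exp (∑ j ∈ range n, -(‖a‖ * ‖q‖ ^ j * (1 - ‖a‖)⁻¹)) := by
        apply Real.exp_le_exp.2
        have : ∑ j ∈ range n, -(‖a‖ * ‖q‖ ^ j * (1 - ‖a‖)⁻¹)
            = -((∑ j ∈ range n, ‖q‖ ^ j) * (‖a‖ * (1 - ‖a‖)⁻¹)) := by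
          rw [Finset.sum_neg_distrib, Finset.sum_mul]
          congr 1
          apply Finset.sum_congr rfl; intro j _; ring
        rw [this, neg_le_neg_iff]
        have h0 : (0:ℝ) ≤ ‖a‖ * (1 - ‖a‖)⁻¹ := by positivity
        calc (∑ j ∈ range n, ‖q‖ ^ j) * (‖a‖ * (1 - ‖a‖)⁻¹)
            ≤ (1 - ‖q‖)⁻¹ * (‖a‖ * (1 - ‖a‖)⁻¹) := by
              exact mul_le_mul_of_nonneg_right hgeo h0
          _ = ‖a‖ * (1 - ‖q‖)⁻¹ * (1 - ‖a‖)⁻¹ := by ring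
    _ = ∏ j ∈ range n, Real.exp (-(‖a‖ * ‖q‖ ^ j * (1 - ‖a‖)⁻¹)) := Real.exp_sum _ _
    _ ≤ ∏ j ∈ range n, ‖1 - a * q ^ j‖ := by
        apply Finset.prod_le_prod (fun j _ => (Real.exp_pos _).le)
        intro j _
        set x : ℝ := ‖a‖ * ‖q‖ ^ j with hxd
        have hqj1 : ‖q‖ ^ j ≤ 1 := pow_le_one₀ (norm_nonneg q) hq.le
        have hx0 : 0 ≤ x := by positivity
        have hxa : x ≤ ‖a‖ := by
          rw [hxd]; nlinarith [norm_nonneg a]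
        have hx1 : x < 1 := lt_of_le_of_lt hxa ha
        have key : Real.exp (-(x * (1 - ‖a‖)⁻¹)) ≤ 1 - x := by
          rw [Real.exp_neg]
          rw [inv_le_comm₀ (Real.exp_pos _) (by linarith)]
          have hne : (1:ℝ) - x ≠ 0 := by linarith
          calc (1 - x)⁻¹ = 1 + x * (1 - x)⁻¹ := by field_simp; try ring
            _ ≤ 1 + x * (1 - ‖a‖)⁻¹ := by
                have h := inv_anti₀ hia (by linarith : 1 - ‖a‖ ≤ 1 - x)
                nlinarith
            _ ≤ Real.exp (x * (1 - ‖a‖)⁻¹) := by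
                have := Real.add_one_le_exp (x * (1 - ‖a‖)⁻¹); linarith
        refine key.trans ?_
        calc 1 - x ≤ ‖(1:ℂ)‖ - ‖a * q ^ j‖ := by
              rw [norm_one, norm_mul, norm_pow]
          _ ≤ ‖1 - a * q ^ j‖ := by
              have := norm_sub_norm_le (1:ℂ) (a * q ^ j); linarith

end
section Alg

variable (q : ℂ)

lemma even_odd_split : ∀ n : ℕ, qPoch q q (2*n) = qPoch q (q^2) n * qPoch (q^2) (q^2) n := by
  intro n
  induction n with
  | zero => simp [qPoch]
  | succ n ih =>
      have h2 : 2*(n+1) = (2*n)+1+1 := by ring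
      rw [h2, qPoch_succ, qPoch_succ, qPoch_succ, qPoch_succ, ih]
      ring

lemma quad_split (n : ℕ) :
    qPoch (q^4) (q^4) n = qPoch (q^2) (q^2) n * qPoch (-q^2) (q^2) n := by
  rw [qPoch, qPoch, qPoch, ← Finset.prod_mul_distrib]
  exact Finset.prod_congr rfl fun j _ => by ring

end Alg

section Telescope

variable {q : ℂ} (hq : ‖q‖ < 1)

/-- `X q n = (q; q²)_{n+1} / (-q²; q²)_n` -/
noncomputable def Xr (q : ℂ) (n : ℕ) : ℂ := qPoch q (q^2) (n+1) / qPoch (-q^2) (q^2) n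

/-- `W q m = (-q²; q²)_m / (q; q²)_m` -/
noncomputable def Wr (q : ℂ) (m : ℕ) : ℂ := qPoch (-q^2) (q^2) m / qPoch q (q^2) m

include hq

lemma hq2 : ‖q^2‖ < 1 := by
  rw [norm_pow]
  exact pow_lt_one₀ (norm_nonneg q) hq (by norm_num)

lemma hq4 : ‖q^4‖ < 1 := by
  rw [norm_pow]
  exact pow_lt_one₀ (norm_nonneg q) hq (by norm_num)

lemma hnq2 : ‖-q^2‖ < 1 := by rw [norm_neg]; exact hq2 hq

lemma PS_L (K : ℕ) :
    (1+q) * ∑ n ∈ Finset.range (K+1),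
      (qPoch q q (2*n) * q^(2*n) / qPoch (q^4) (q^4) n) = 2 - Xr q K := by
  induction K with
  | zero =>
      simp only [Finset.sum_range_one, Xr]
      norm_num [qPoch_zero]
      rw [qPoch_succ, qPoch_zero]
      ring
  | succ K ih =>
      rw [Finset.sum_range_succ, mul_add, ih]
      have hA : qPoch q (q^2) (K+1) ≠ 0 := qPoch_ne_zero hq (hq2 hq) _
      have hA2 : qPoch q (q^2) (K+2) ≠ 0 := qPoch_ne_zero hq (hq2 hq) _
      have hE : qPoch (q^2) (q^2) (K+1) ≠ 0 := qPoch_ne_zero (hq2 hq) (hq2 hq) _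
      have hF : qPoch (-q^2) (q^2) K ≠ 0 := qPoch_ne_zero (hnq2 hq) (hq2 hq) _
      have hF1 : qPoch (-q^2) (q^2) (K+1) ≠ 0 := qPoch_ne_zero (hnq2 hq) (hq2 hq) _
      have key : (1+q) * (qPoch q q (2*(K+1)) * q^(2*(K+1)) / qPoch (q^4) (q^4) (K+1))
          = Xr q K - Xr q (K+1) := by
        rw [even_odd_split, quad_split, Xr, Xr]
        rw [show qPoch q (q^2) (K+2) = qPoch q (q^2) (K+1) * (1 - q * (q^2)^(K+1)) from
          qPoch_succ _ _ _]
        rw [show qPoch (-q^2) (q^2) (K+1) = qPoch (-q^2) (q^2) K * (1 - (-q^2) * (q^2)^K) from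
          qPoch_succ _ _ _]
        have hfK : (1 : ℂ) - (-q^2) * (q^2)^K ≠ 0 := factor_ne_zero' (hnq2 hq) (hq2 hq) K
        have hFv : qPoch (-q^2) (q^2) K * (1 - (-q^2) * (q^2)^K) ≠ 0 := mul_ne_zero hF hfK
        rw [div_sub_div _ _ hF hFv, ← mul_div_assoc,
          div_eq_div_iff (mul_ne_zero hE hFv) (mul_ne_zero hF hFv)]
        ring
      rw [key]
      ring

lemma PS_R (M : ℕ) :
    (1+q) * ∑ m ∈ Finset.range M,
      (q^(2*m+1) * qPoch (-q^2) (q^2) m / qPoch q (q^2) (m+1)) = Wr q M - 1 := by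
  induction M with
  | zero => simp [Wr, qPoch_zero]
  | succ M ih =>
      rw [Finset.sum_range_succ, mul_add, ih]
      have hA : qPoch q (q^2) M ≠ 0 := qPoch_ne_zero hq (hq2 hq) _
      have hA1 : qPoch q (q^2) (M+1) ≠ 0 := qPoch_ne_zero hq (hq2 hq) _
      have hF : qPoch (-q^2) (q^2) M ≠ 0 := qPoch_ne_zero (hnq2 hq) (hq2 hq) _
      have key : (1+q) * (q^(2*M+1) * qPoch (-q^2) (q^2) M / qPoch q (q^2) (M+1))
          = Wr q (M+1) - Wr q M := by
        rw [Wr, Wr]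
        rw [show qPoch (-q^2) (q^2) (M+1) = qPoch (-q^2) (q^2) M * (1 - (-q^2) * (q^2)^M) from
          qPoch_succ _ _ _]
        rw [show qPoch q (q^2) (M+1) = qPoch q (q^2) M * (1 - q * (q^2)^M) from
          qPoch_succ _ _ _] 
        have hfM : (1 : ℂ) - q * (q^2)^M ≠ 0 := factor_ne_zero' hq (hq2 hq) M
        have hAu : qPoch q (q^2) M * (1 - q * (q^2)^M) ≠ 0 := mul_ne_zero hA hfM
        rw [div_sub_div _ _ hAu hA, ← mul_div_assoc,
          div_eq_div_iff hAu (mul_ne_zero hAu hA)]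
        ring
      rw [key]
      ring

end Telescope
section Main

variable {q : ℂ} (hq : ‖q‖ < 1)
include hq

lemma summable_L :
    Summable (fun n : ℕ => qPoch q q (2*n) * q^(2*n) / qPoch (q^4) (q^4) n) := by
  set K1 : ℝ := Real.exp (‖q‖ * (1 - ‖q‖)⁻¹) with hK1
  set c : ℝ := Real.exp (-(‖q^4‖ * (1 - ‖q^4‖)⁻¹ * (1 - ‖q^4‖)⁻¹)) with hc
  have hc0 : 0 < c := Real.exp_pos _
  have hr0 : (0:ℝ) ≤ ‖q‖^2 := by positivity
  have hr1 : ‖q‖^2 < 1 := pow_lt_one₀ (norm_nonneg q) hq (by norm_num)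
  apply Summable.of_norm_bounded (g := fun n => (K1/c) * (‖q‖^2)^n)
    ((summable_geometric_of_lt_one hr0 hr1).mul_left _)
  intro n
  rw [norm_div, norm_mul, norm_pow]
  have h1 : ‖qPoch q q (2*n)‖ ≤ K1 := norm_qPoch_le hq _
  have h2 : c ≤ ‖qPoch (q^4) (q^4) n‖ := le_norm_qPoch (hq4 hq) (hq4 hq) n
  have hpow : ‖q‖^(2*n) = (‖q‖^2)^n := by rw [← pow_mul]
  calc ‖qPoch q q (2*n)‖ * ‖q‖^(2*n) / ‖qPoch (q^4) (q^4) n‖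
      ≤ K1 * (‖q‖^2)^n / c := by
        apply div_le_div₀ (by positivity) ?_ hc0 h2
        rw [hpow]
        exact mul_le_mul_of_nonneg_right h1 (by positivity)
    _ = (K1/c) * (‖q‖^2)^n := by ring

lemma summable_R :
    Summable (fun m : ℕ => q^(2*m+1) * qPoch (-q^2) (q^2) m / qPoch q (q^2) (m+1)) := by
  set K1 : ℝ := Real.exp (‖-q^2‖ * (1 - ‖q^2‖)⁻¹) with hK1
  set c : ℝ := Real.exp (-(‖q‖ * (1 - ‖q^2‖)⁻¹ * (1 - ‖q‖)⁻¹)) with hc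
  have hc0 : 0 < c := Real.exp_pos _
  have hr0 : (0:ℝ) ≤ ‖q‖^2 := by positivity
  have hr1 : ‖q‖^2 < 1 := pow_lt_one₀ (norm_nonneg q) hq (by norm_num)
  apply Summable.of_norm_bounded (g := fun m => (‖q‖ * K1/c) * (‖q‖^2)^m)
    ((summable_geometric_of_lt_one hr0 hr1).mul_left _)
  intro m
  rw [norm_div, norm_mul, norm_pow]
  have h1 : ‖qPoch (-q^2) (q^2) m‖ ≤ K1 := norm_qPoch_le (hq2 hq) _
  have h2 : c ≤ ‖qPoch q (q^2) (m+1)‖ := le_norm_qPoch hq (hq2 hq) _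
  have hpow : ‖q‖^(2*m+1) = ‖q‖ * (‖q‖^2)^m := by
    rw [pow_succ, ← pow_mul]; ring
  calc ‖q‖^(2*m+1) * ‖qPoch (-q^2) (q^2) m‖ / ‖qPoch q (q^2) (m+1)‖
      ≤ ‖q‖ * (‖q‖^2)^m * K1 / c := by
        apply div_le_div₀ (by positivity) ?_ hc0 h2
        rw [hpow]
        calc ‖q‖ * (‖q‖^2)^m * ‖qPoch (-q^2) (q^2) m‖ ≤ ‖q‖ * (‖q‖^2)^m * K1 := by
              apply mul_le_mul_of_nonneg_left h1 (by positivity)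
          _ = ‖q‖ * (‖q‖^2)^m * K1 := rfl
    _ = (‖q‖ * K1/c) * (‖q‖^2)^m := by ring

end Main

theorem stmt_13 (q : ℂ) (hq : ‖q‖ < 1) :
    ∑' n : ℕ, qPoch q q (2 * n) * q ^ (2 * n) / qPoch (q ^ 4) (q ^ 4) n =
      1 / (1 + q) + (qPochInf q q / qPochInf (q ^ 4) (q ^ 4)) *
        ∑' m : ℕ, q ^ (2 * m + 1) * qPoch (-q ^ 2) (q ^ 2) m / qPoch q (q ^ 2) (m + 1) := by
  have hq' : ‖q‖ < 1 := by exact hq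
  have h1q : (1 : ℂ) + q ≠ 0 := by
    intro h
    have : q = -1 := by linear_combination h
    rw [this] at hq'
    simp at hq'
  set A := qPochInf q (q^2) with hA
  set F := qPochInf (-q^2) (q^2) with hF
  set E := qPochInf (q^2) (q^2) with hE
  have hA0 : A ≠ 0 := qPochInf_ne_zero hq' (hq2 hq')
  have hF0 : F ≠ 0 := qPochInf_ne_zero (hnq2 hq') (hq2 hq')
  have hE0 : E ≠ 0 := qPochInf_ne_zero (hq2 hq') (hq2 hq')
  have tA : Tendsto (fun n => qPoch q (q^2) n) atTop (𝓝 A) := tendsto_qPoch hq' (hq2 hq')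
  have tF : Tendsto (fun n => qPoch (-q^2) (q^2) n) atTop (𝓝 F) :=
    tendsto_qPoch (hnq2 hq') (hq2 hq')
  have tE : Tendsto (fun n => qPoch (q^2) (q^2) n) atTop (𝓝 E) :=
    tendsto_qPoch (hq2 hq') (hq2 hq')
  -- limit of Xr
  have hX : Tendsto (fun K => Xr q K) atTop (𝓝 (A/F)) := by
    have h1 : Tendsto (fun K : ℕ => qPoch q (q^2) (K+1)) atTop (𝓝 A) :=
      tA.comp (tendsto_add_atTop_nat 1)
    exact h1.div tF hF0
  -- limit of Wr
  have hW : Tendsto (fun M => Wr q M) atTop (𝓝 (F/A)) := tF.div tA hA0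
  -- value of the LHS series
  have hsumL := summable_L hq'
  have hLval : ∑' n : ℕ, qPoch q q (2*n) * q^(2*n) / qPoch (q^4) (q^4) n
      = (2 - A/F) / (1+q) := by
    have t1 : Tendsto (fun K : ℕ => ∑ n ∈ Finset.range (K+1),
        (qPoch q q (2*n) * q^(2*n) / qPoch (q^4) (q^4) n)) atTop
        (𝓝 (∑' n : ℕ, qPoch q q (2*n) * q^(2*n) / qPoch (q^4) (q^4) n)) :=
      hsumL.hasSum.tendsto_sum_nat.comp (tendsto_add_atTop_nat 1)
    have t2 : Tendsto (fun K : ℕ => (2 - Xr q K) / (1+q)) atTop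
        (𝓝 ((2 - A/F) / (1+q))) := (hX.const_sub 2).div_const _
    refine tendsto_nhds_unique t1 (t2.congr fun K => ?_)
    rw [div_eq_iff h1q]
    linear_combination -PS_L hq' K
  -- value of the RHS series
  have hsumR := summable_R hq'
  have hRval : ∑' m : ℕ, q^(2*m+1) * qPoch (-q^2) (q^2) m / qPoch q (q^2) (m+1)
      = (F/A - 1) / (1+q) := by
    have t1 : Tendsto (fun M : ℕ => ∑ m ∈ Finset.range M,
        (q^(2*m+1) * qPoch (-q^2) (q^2) m / qPoch q (q^2) (m+1))) atTop
        (𝓝 (∑' m : ℕ, q^(2*m+1) * qPoch (-q^2) (q^2) m / qPoch q (q^2) (m+1))) :=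
      hsumR.hasSum.tendsto_sum_nat
    have t2 : Tendsto (fun M : ℕ => (Wr q M - 1) / (1+q)) atTop
        (𝓝 ((F/A - 1) / (1+q))) := (hW.sub_const 1).div_const _
    refine tendsto_nhds_unique t1 (t2.congr fun M => ?_)
    rw [div_eq_iff h1q]
    linear_combination -PS_R hq' M
  -- infinite product splittings
  have hdouble : Tendsto (fun n : ℕ => 2*n) atTop atTop :=
    tendsto_atTop_mono (fun n => by simp; omega) tendsto_id
  have I1 : qPochInf q q = A * E := by
    refine tendsto_nhds_unique ((tendsto_qPoch hq' hq').comp hdouble) ?_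
    exact (tA.mul tE).congr fun n => (even_odd_split q n).symm
  have I2 : qPochInf (q^4) (q^4) = E * F := by
    refine tendsto_nhds_unique (tendsto_qPoch (hq4 hq') (hq4 hq')) ?_
    exact (tE.mul tF).congr fun n => (quad_split q n).symm
  rw [hLval, hRval, I1, I2]
  field_simp
  ring
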